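/- arXiv:2007.02717 — 3 statements merged into one kernel-verified Lean document; each statement's English description precedes it below -/
import Mathlib

section
/- Let A₁, A₂ be Hermitian dA×dA complex matrices, B₁, B₂ be Hermitian dB×dB complex matrices, and let k₁, k₂ be nonzero real numbers. Suppose λ ≠ 0 is an eigenvalue of K = k₁·(A₁ ⊗ B₁) + k₂·(A₂ ⊗ B₂) and that α ⊗ β is an eigenvector of K for λ, where α ∈ ℂ^{dA} and β ∈ ℂ^{dB} are nonzero. Then either α is a common eigenvector of A₁ and A₂ (i.e., there exist scalars a₁, a₂ with A₁α = a₁α and A₂α = a₂α), or β is a common eigenvector of B₁ and B₂. -/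
open Matrix
open scoped Kronecker

/-- The Kronecker (tensor) product of two vectors: `(α ⊗ β)(i,j) = α i * β j`. -/
def vecKron {dA dB : ℕ} (α : Fin dA → ℂ) (β : Fin dB → ℂ) : Fin dA × Fin dB → ℂ :=
  fun p => α p.1 * β p.2

lemma kron_mulVec {dA dB : ℕ} (M : Matrix (Fin dA) (Fin dA) ℂ)
    (N : Matrix (Fin dB) (Fin dB) ℂ) (α : Fin dA → ℂ) (β : Fin dB → ℂ) :
    (M ⊗ₖ N).mulVec (vecKron α β) = vecKron (M.mulVec α) (N.mulVec β) := by
  funext p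
  obtain ⟨i, j⟩ := p
  simp only [Matrix.mulVec, vecKron, dotProduct, Matrix.kroneckerMap_apply,
    Fintype.sum_prod_type]
  rw [Finset.sum_mul_sum]
  apply Finset.sum_congr rfl
  intro i' _
  apply Finset.sum_congr rfl
  intro j' _
  ring

/-- If `λ ≠ 0` is an eigenvalue of `K = k₁ A₁⊗B₁ + k₂ A₂⊗B₂`
(`k₁, k₂` nonzero reals) with product eigenvector `α ⊗ β`, then `α` is a common eigenvector
of `A₁, A₂` or `β` is a common eigenvector of `B₁, B₂`. -/
theorem stmt4 {dA dB : ℕ}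
    (A₁ A₂ : Matrix (Fin dA) (Fin dA) ℂ) (B₁ B₂ : Matrix (Fin dB) (Fin dB) ℂ)
    (hA₁ : A₁.IsHermitian) (hA₂ : A₂.IsHermitian)
    (hB₁ : B₁.IsHermitian) (hB₂ : B₂.IsHermitian)
    (k₁ k₂ : ℝ) (hk₁ : k₁ ≠ 0) (hk₂ : k₂ ≠ 0)
    (lam : ℂ) (hlam : lam ≠ 0)
    (α : Fin dA → ℂ) (β : Fin dB → ℂ) (hα : α ≠ 0) (hβ : β ≠ 0)
    (hev : ((k₁ : ℂ) • (A₁ ⊗ₖ B₁) + (k₂ : ℂ) • (A₂ ⊗ₖ B₂)).mulVec (vecKron α β)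
      = lam • vecKron α β) :
    (∃ a₁ a₂ : ℂ, A₁.mulVec α = a₁ • α ∧ A₂.mulVec α = a₂ • α) ∨
    (∃ b₁ b₂ : ℂ, B₁.mulVec β = b₁ • β ∧ B₂.mulVec β = b₂ • β) := by
  classical
  set u₁ := A₁.mulVec α with hu₁
  set u₂ := A₂.mulVec α with hu₂
  set w₁ := B₁.mulVec β with hw₁
  set w₂ := B₂.mulVec β with hw₂
  -- pointwise key relation
  have key : ∀ i j, (k₁ : ℂ) * (u₁ i * w₁ j) + (k₂ : ℂ) * (u₂ i * w₂ j)
      = lam * (α i * β j) := by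
    intro i j
    have h := congrFun hev (i, j)
    simpa [Matrix.add_mulVec, Matrix.smul_mulVec, kron_mulVec, vecKron,
      Pi.add_apply, Pi.smul_apply, smul_eq_mul] using h
  obtain ⟨i₀, hi₀⟩ : ∃ i, α i ≠ 0 := by
    by_contra h
    push_neg at h
    exact hα (funext h)
  obtain ⟨j₀, hj₀⟩ : ∃ j, β j ≠ 0 := by
    by_contra h
    push_neg at h
    exact hβ (funext h)
  have hlai : lam * α i₀ ≠ 0 := mul_ne_zero hlam hi₀
  by_cases hdep : ∃ c : ℂ, w₂ = c • w₁ ∨ w₁ = c • w₂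
  · -- dependent case : β is a common eigenvector
    right
    obtain ⟨c, hc⟩ := hdep
    rcases hc with hc | hc
    · -- w₂ = c • w₁
      set W : ℂ := (k₁ : ℂ) * u₁ i₀ + c * ((k₂ : ℂ) * u₂ i₀) with hW
      have hrel : ∀ j, W * w₁ j = lam * α i₀ * β j := by
        intro j
        have := key i₀ j
        rw [hc] at this
        simp only [Pi.smul_apply, smul_eq_mul] at this
        calc W * w₁ j = (k₁ : ℂ) * (u₁ i₀ * w₁ j) + (k₂ : ℂ) * (u₂ i₀ * (c * w₁ j)) := by ring
          _ = lam * (α i₀ * β j) := this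
          _ = lam * α i₀ * β j := by ring
      have hWne : W ≠ 0 := by
        intro hW0
        have := hrel j₀
        rw [hW0, zero_mul] at this
        exact (mul_ne_zero hlai hj₀) this.symm
      refine ⟨lam * α i₀ / W, c * (lam * α i₀ / W), ?_, ?_⟩
      · funext j
        have := hrel j
        simp only [Pi.smul_apply, smul_eq_mul]
        field_simp
        linear_combination this
      · funext j
        rw [hc]
        have := hrel j
        simp only [Pi.smul_apply, smul_eq_mul]
        field_simp
        linear_combination c * this
    · -- w₁ = c • w₂
      set W : ℂ := c * ((k₁ : ℂ) * u₁ i₀) + (k₂ : ℂ) * u₂ i₀ with hW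
      have hrel : ∀ j, W * w₂ j = lam * α i₀ * β j := by
        intro j
        have := key i₀ j
        rw [hc] at this
        simp only [Pi.smul_apply, smul_eq_mul] at this
        calc W * w₂ j = (k₁ : ℂ) * (u₁ i₀ * (c * w₂ j)) + (k₂ : ℂ) * (u₂ i₀ * w₂ j) := by ring
          _ = lam * (α i₀ * β j) := this
          _ = lam * α i₀ * β j := by ring
      have hWne : W ≠ 0 := by
        intro hW0
        have := hrel j₀
        rw [hW0, zero_mul] at this
        exact (mul_ne_zero hlai hj₀) this.symm
      refine ⟨c * (lam * α i₀ / W), lam * α i₀ / W, ?_, ?_⟩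
      · funext j
        rw [hc]
        have := hrel j
        simp only [Pi.smul_apply, smul_eq_mul]
        field_simp
        linear_combination c * this
      · funext j
        have := hrel j
        simp only [Pi.smul_apply, smul_eq_mul]
        field_simp
        linear_combination this
  · -- independent case : α is a common eigenvector
    left
    push_neg at hdep
    have hw₁ne : w₁ ≠ 0 := by
      intro h
      exact (hdep 0).2 (by rw [h]; simp)
    have hw₂ne : w₂ ≠ 0 := by
      intro h
      exact (hdep 0).1 (by rw [h]; simp)
    have hindep : ∀ x y : ℂ, (∀ j, x * w₁ j + y * w₂ j = 0) → x = 0 ∧ y = 0 := by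
      intro x y h
      have hx : x = 0 := by
        by_contra hx
        apply (hdep (-y / x)).2
        funext j
        have := h j
        simp only [Pi.smul_apply, smul_eq_mul]
        rw [div_mul_eq_mul_div, eq_div_iff hx]
        linear_combination this
      refine ⟨hx, ?_⟩
      obtain ⟨j, hj⟩ : ∃ j, w₂ j ≠ 0 := by
        by_contra hc
        push_neg at hc
        exact hw₂ne (funext hc)
      have := h j
      rw [hx, zero_mul, zero_add] at this
      exact (mul_eq_zero.mp this).resolve_right hj
    -- combine relations at i and i₀
    have main : ∀ i, u₁ i * α i₀ = u₁ i₀ * α i ∧ u₂ i * α i₀ = u₂ i₀ * α i := by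
      intro i
      have h := hindep ((k₁ : ℂ) * (α i₀ * u₁ i - α i * u₁ i₀))
        ((k₂ : ℂ) * (α i₀ * u₂ i - α i * u₂ i₀)) ?_
      · obtain ⟨h1, h2⟩ := h
        have hk₁' : (k₁ : ℂ) ≠ 0 := by exact_mod_cast hk₁
        have hk₂' : (k₂ : ℂ) ≠ 0 := by exact_mod_cast hk₂
        have e1 := (mul_eq_zero.mp h1).resolve_left hk₁'
        have e2 := (mul_eq_zero.mp h2).resolve_left hk₂'
        constructor <;> [linear_combination e1; linear_combination e2]
      · intro j
        have hi := key i j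
        have hi0 := key i₀ j
        linear_combination α i₀ * hi - α i * hi0
    refine ⟨u₁ i₀ / α i₀, u₂ i₀ / α i₀, ?_, ?_⟩
    · funext i
      have := (main i).1
      simp only [Pi.smul_apply, smul_eq_mul]
      field_simp
      linear_combination this
    · funext i
      have := (main i).2
      simp only [Pi.smul_apply, smul_eq_mul]
      field_simp
      linear_combination this
end

section
/- Let A₁, A₂ be Hermitian dA×dA complex matrices such that every common eigenvector of A₁ and A₂ corresponds to eigenvalue 0 for both (i.e., if a nonzero α satisfies A₁α = a₁α and A₂α = a₂α then a₁ = a₂ = 0), and similarly let B₁, B₂ be Hermitian dB×dB matrices such that every common eigenvector of B₁ and B₂ corresponds to eigenvalue 0 for both. Assume A₁ ⊗ B₁ ≠ 0 or A₂ ⊗ B₂ ≠ 0. Then for all real k₁, k₂ with k₁·k₂ ≠ 0, setting K = k₁·(A₁ ⊗ B₁) + k₂·(A₂ ⊗ B₂), either λ_min(K) < λ⊗_min(K) or λ_max(K) > λ⊗_max(K); that is, W_min(K) = K − λ⊗_min(K)·I is a witness or W_max(K) = K − λ⊗_max(K)·I is the negative of a witness. -/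
open Matrix
open scoped Kronecker

/-- The minimum (real) eigenvalue of a matrix. For a Hermitian matrix this is the least
eigenvalue. -/
noncomputable def minEig {n : Type*} [Fintype n] (K : Matrix n n ℂ) : ℝ :=
  sInf {μ : ℝ | ∃ v : n → ℂ, v ≠ 0 ∧ K.mulVec v = (μ : ℂ) • v}

/-- The maximum (real) eigenvalue of a matrix. -/
noncomputable def maxEig {n : Type*} [Fintype n] (K : Matrix n n ℂ) : ℝ :=
  sSup {μ : ℝ | ∃ v : n → ℂ, v ≠ 0 ∧ K.mulVec v = (μ : ℂ) • v}

/-- `λ⊗_min(K)`: the infimum of `⟨v, Kv⟩` over product unit vectors `v`. -/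
noncomputable def prodMin {dA dB : ℕ} (K : Matrix (Fin dA × Fin dB) (Fin dA × Fin dB) ℂ) : ℝ :=
  sInf {r : ℝ | ∃ (α : Fin dA → ℂ) (β : Fin dB → ℂ),
    star (vecKron α β) ⬝ᵥ vecKron α β = 1 ∧
    (star (vecKron α β) ⬝ᵥ K.mulVec (vecKron α β)).re = r}

/-- `λ⊗_max(K)`: the supremum of `⟨v, Kv⟩` over product unit vectors `v`. -/
noncomputable def prodMax {dA dB : ℕ} (K : Matrix (Fin dA × Fin dB) (Fin dA × Fin dB) ℂ) : ℝ :=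
  sSup {r : ℝ | ∃ (α : Fin dA → ℂ) (β : Fin dB → ℂ),
    star (vecKron α β) ⬝ᵥ vecKron α β = 1 ∧
    (star (vecKron α β) ⬝ᵥ K.mulVec (vecKron α β)).re = r}

/-! ### Auxiliary lemmas -/

namespace Stmt6Aux

open scoped ComplexOrder Pointwise

/-! #### Elementary vector algebra -/

lemma pair_extract {d : ℕ} {x y : Fin d → ℂ} (hx : x ≠ 0)
    (hxy : ∀ c : ℂ, y ≠ c • x) {u v : ℂ} (h : u • x + v • y = 0) :
    u = 0 ∧ v = 0 := by
  by_cases hv : v = 0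
  · subst hv
    simp only [zero_smul, add_zero, smul_eq_zero] at h
    exact ⟨h.resolve_right hx, rfl⟩
  · exfalso
    apply hxy (v⁻¹ * -u)
    have h2 : v • y = (-u) • x := by
      rw [add_comm, add_eq_zero_iff_eq_neg] at h
      rw [h, neg_smul]
    calc y = v⁻¹ • (v • y) := by rw [smul_smul, inv_mul_cancel₀ hv, one_smul]
    _ = (v⁻¹ * -u) • x := by rw [h2, smul_smul]

lemma triple_extract {d : ℕ} {x y z : Fin d → ℂ} (hx : x ≠ 0)
    (hxy : ∀ c : ℂ, y ≠ c • x) (hz : ∀ c c' : ℂ, z ≠ c • x + c' • y)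
    {u v w : ℂ} (h : u • x + v • y + w • z = 0) :
    u = 0 ∧ v = 0 ∧ w = 0 := by
  by_cases hw : w = 0
  · subst hw
    simp only [zero_smul, add_zero] at h
    obtain ⟨hu, hv⟩ := pair_extract hx hxy h
    exact ⟨hu, hv, rfl⟩
  · exfalso
    apply hz (w⁻¹ * -u) (w⁻¹ * -v)
    have h2 : w • z = (-u) • x + (-v) • y := by
      rw [add_comm, add_eq_zero_iff_eq_neg] at h
      rw [h, neg_add, neg_smul, neg_smul]
    calc z = w⁻¹ • (w • z) := by rw [smul_smul, inv_mul_cancel₀ hw, one_smul]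
    _ = (w⁻¹ * -u) • x + (w⁻¹ * -v) • y := by
        rw [h2, smul_add, smul_smul, smul_smul]

/-! #### Kronecker products of vectors -/

lemma kron_mulVec {dA dB : ℕ} (A : Matrix (Fin dA) (Fin dA) ℂ) (B : Matrix (Fin dB) (Fin dB) ℂ)
    (α : Fin dA → ℂ) (β : Fin dB → ℂ) :
    (A ⊗ₖ B) *ᵥ vecKron α β = vecKron (A *ᵥ α) (B *ᵥ β) := by
  funext p
  simp only [Matrix.mulVec, dotProduct, vecKron, kroneckerMap_apply,
    Fintype.sum_prod_type]
  rw [Finset.sum_mul_sum]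
  exact Finset.sum_congr rfl fun k _ => Finset.sum_congr rfl fun l _ => by ring

lemma dot_kron {dA dB : ℕ} (α α' : Fin dA → ℂ) (β β' : Fin dB → ℂ) :
    star (vecKron α β) ⬝ᵥ vecKron α' β' = (star α ⬝ᵥ α') * (star β ⬝ᵥ β') := by
  simp only [dotProduct, vecKron, Pi.star_apply, Fintype.sum_prod_type]
  rw [Finset.sum_mul_sum]
  exact Finset.sum_congr rfl fun k _ => Finset.sum_congr rfl fun l _ => by
    simp [star_mul']; ring

lemma star_dot_self_eq {d : ℕ} (α : Fin d → ℂ) :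
    star α ⬝ᵥ α = ((∑ i, Complex.normSq (α i) : ℝ) : ℂ) := by
  push_cast
  simp only [dotProduct, Pi.star_apply]
  exact Finset.sum_congr rfl fun i _ => by
    rw [Complex.normSq_eq_conj_mul_self]; rfl

lemma ne_zero_of_unit_left {dA dB : ℕ} {α : Fin dA → ℂ} {β : Fin dB → ℂ}
    (h : star (vecKron α β) ⬝ᵥ vecKron α β = 1) : α ≠ 0 ∧ β ≠ 0 := by
  constructor
  · rintro rfl
    rw [dot_kron] at h
    simp at h
  · rintro rfl
    rw [dot_kron] at h
    simp at h

/-! #### The key lemma: a product eigenvector has eigenvalue 0 -/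

lemma eig_zero {dA dB : ℕ}
    (A₁ A₂ : Matrix (Fin dA) (Fin dA) ℂ) (B₁ B₂ : Matrix (Fin dB) (Fin dB) ℂ)
    (hA : ∀ (α : Fin dA → ℂ) (a₁ a₂ : ℂ), α ≠ 0 →
      A₁.mulVec α = a₁ • α → A₂.mulVec α = a₂ • α → a₁ = 0 ∧ a₂ = 0)
    (hB : ∀ (β : Fin dB → ℂ) (b₁ b₂ : ℂ), β ≠ 0 →
      B₁.mulVec β = b₁ • β → B₂.mulVec β = b₂ • β → b₁ = 0 ∧ b₂ = 0)
    {k₁ k₂ : ℂ} (hk₁ : k₁ ≠ 0) (hk₂ : k₂ ≠ 0)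
    {α : Fin dA → ℂ} {β : Fin dB → ℂ} (hα : α ≠ 0) (hβ : β ≠ 0) {l : ℂ}
    (h : ∀ p j, k₁ * ((A₁ *ᵥ α) p * (B₁ *ᵥ β) j) + k₂ * ((A₂ *ᵥ α) p * (B₂ *ᵥ β) j)
        = l * (α p * β j)) : l = 0 := by
  obtain ⟨j₀, hj₀⟩ := Function.ne_iff.mp hβ
  simp only [Pi.zero_apply] at hj₀
  have finish : (∀ j, l * β j = 0) → l = 0 := fun hall => by
    rcases mul_eq_zero.mp (hall j₀) with h' | h'
    · exact h'
    · exact absurd h' hj₀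
  by_cases ha₁ : ∃ a₁ : ℂ, A₁ *ᵥ α = a₁ • α
  · obtain ⟨a₁, ha₁⟩ := ha₁
    by_cases ha₂ : ∃ a₂ : ℂ, A₂ *ᵥ α = a₂ • α
    · obtain ⟨a₂, ha₂⟩ := ha₂
      obtain ⟨e₁, e₂⟩ := hA α a₁ a₂ hα ha₁ ha₂
      subst e₁; subst e₂
      apply finish
      intro j
      obtain ⟨p₀, hp₀⟩ := Function.ne_iff.mp hα
      simp only [Pi.zero_apply] at hp₀
      have := h p₀ j
      have h1 : (A₁ *ᵥ α) p₀ = 0 := by rw [ha₁]; simp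
      have h2 : (A₂ *ᵥ α) p₀ = 0 := by rw [ha₂]; simp
      rw [h1, h2] at this
      simp only [mul_zero, zero_mul, add_zero, zero_add] at this
      rcases mul_eq_zero.mp this.symm with h' | h'
      · exact mul_eq_zero_of_left h' _
      · rcases mul_eq_zero.mp h' with h'' | h''
        · exact absurd h'' hp₀
        · exact mul_eq_zero_of_right _ h''
    · push_neg at ha₂
      have key : ∀ j, k₁ * a₁ * (B₁ *ᵥ β) j - l * β j = 0 ∧ k₂ * (B₂ *ᵥ β) j = 0 := by
        intro j
        apply pair_extract hα ha₂
        funext p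
        have hp : (A₁ *ᵥ α) p = a₁ * α p := by rw [ha₁]; simp
        simp only [Pi.add_apply, Pi.smul_apply, smul_eq_mul, Pi.zero_apply]
        linear_combination h p j - (k₁ * (B₁ *ᵥ β) j) * hp
      have hB₂ : B₂ *ᵥ β = (0 : ℂ) • β := by
        funext j
        have := (key j).2
        simp only [Pi.smul_apply, smul_eq_mul, zero_mul]
        exact (mul_eq_zero.mp this).resolve_left hk₂
      by_cases hka : k₁ * a₁ = 0
      · apply finish
        intro j
        have := (key j).1
        rw [hka, zero_mul, zero_sub, neg_eq_zero] at this
        exact this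
      · have hB₁ : B₁ *ᵥ β = (l / (k₁ * a₁)) • β := by
          funext j
          have := (key j).1
          simp only [Pi.smul_apply, smul_eq_mul]
          rw [div_mul_eq_mul_div, eq_div_iff hka]
          linear_combination this
        obtain ⟨hb, -⟩ := hB β (l / (k₁ * a₁)) 0 hβ hB₁ hB₂
        rcases div_eq_zero_iff.mp hb with h' | h'
        · exact h'
        · exact absurd h' hka
  · push_neg at ha₁
    by_cases ha₂ : ∃ c d : ℂ, A₂ *ᵥ α = c • α + d • (A₁ *ᵥ α)
    · obtain ⟨c, d, hcd⟩ := ha₂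
      have key : ∀ j, k₂ * c * (B₂ *ᵥ β) j - l * β j = 0 ∧
          k₁ * (B₁ *ᵥ β) j + k₂ * d * (B₂ *ᵥ β) j = 0 := by
        intro j
        apply pair_extract hα ha₁
        funext p
        have hp : (A₂ *ᵥ α) p = c * α p + d * (A₁ *ᵥ α) p := by rw [hcd]; simp
        simp only [Pi.add_apply, Pi.smul_apply, smul_eq_mul, Pi.zero_apply]
        linear_combination h p j - (k₂ * (B₂ *ᵥ β) j) * hp
      by_cases hc : c = 0
      · apply finish
        intro j
        have := (key j).1
        rw [hc, mul_zero, zero_mul, zero_sub, neg_eq_zero] at this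
        exact this
      · have hkc : k₂ * c ≠ 0 := mul_ne_zero hk₂ hc
        have hB₂ : B₂ *ᵥ β = (l / (k₂ * c)) • β := by
          funext j
          have := (key j).1
          simp only [Pi.smul_apply, smul_eq_mul]
          rw [div_mul_eq_mul_div, eq_div_iff hkc]
          linear_combination this
        have hB₁ : B₁ *ᵥ β = (-(k₂ * d * (l / (k₂ * c))) / k₁) • β := by
          funext j
          have h2 := (key j).2
          have h1 : (B₂ *ᵥ β) j = l / (k₂ * c) * β j := by
            rw [hB₂]; simp
          simp only [Pi.smul_apply, smul_eq_mul]
          rw [div_mul_eq_mul_div, eq_div_iff hk₁]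
          linear_combination h2 - (k₂ * d) * h1
        obtain ⟨-, hb⟩ := hB β (-(k₂ * d * (l / (k₂ * c))) / k₁) (l / (k₂ * c)) hβ hB₁ hB₂
        rcases div_eq_zero_iff.mp hb with h' | h'
        · exact h'
        · exact absurd h' hkc
    · push_neg at ha₂
      apply finish
      intro j
      have key := triple_extract hα ha₁ ha₂
        (u := -(l * β j)) (v := k₁ * (B₁ *ᵥ β) j) (w := k₂ * (B₂ *ᵥ β) j) ?_
      · have := key.1
        rwa [neg_eq_zero] at this
      · funext p
        simp only [Pi.add_apply, Pi.smul_apply, smul_eq_mul, Pi.zero_apply]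
        linear_combination h p j

/-! #### Spectral facts -/

lemma real_smul_pi {n : Type*} (r : ℝ) (f : n → ℂ) : r • f = (r : ℂ) • f := by
  funext i
  simp [Complex.real_smul]

lemma eig_mem_range {n : Type*} [Fintype n] [DecidableEq n]
    {K : Matrix n n ℂ} (hK : K.IsHermitian) {μ : ℝ} {v : n → ℂ}
    (hv : v ≠ 0) (h : K *ᵥ v = (μ : ℂ) • v) : μ ∈ Set.range hK.eigenvalues := by
  set U : Matrix n n ℂ := (hK.eigenvectorUnitary : Matrix n n ℂ) with hUdef
  have hU1 : star U * U = 1 := Unitary.coe_star_mul_self hK.eigenvectorUnitary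
  have hU2 : U * star U = 1 := Unitary.coe_mul_star_self hK.eigenvectorUnitary
  set w := star U *ᵥ v with hw
  have hwne : w ≠ 0 := by
    intro h0
    apply hv
    have hv2 : U *ᵥ w = v := by
      rw [hw, mulVec_mulVec, hU2, one_mulVec]
    rw [h0, mulVec_zero] at hv2
    exact hv2.symm
  have hM : star U * K = diagonal (RCLike.ofReal ∘ hK.eigenvalues) * star U := by
    conv_lhs => rw [hK.spectral_theorem, Unitary.conjStarAlgAut_apply]
    rw [← mul_assoc, ← mul_assoc, hU1, one_mul]
  have hDw : diagonal (RCLike.ofReal ∘ hK.eigenvalues) *ᵥ w = (μ : ℂ) • w := by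
    rw [hw, mulVec_mulVec, ← hM, ← mulVec_mulVec, h, mulVec_smul]
  obtain ⟨i, hi⟩ := Function.ne_iff.mp hwne
  simp only [Pi.zero_apply] at hi
  have := congrFun hDw i
  rw [mulVec_diagonal] at this
  simp only [Function.comp_apply, Pi.smul_apply, smul_eq_mul, RCLike.ofReal_alg] at this
  have heq : (hK.eigenvalues i : ℂ) = μ := mul_right_cancel₀ hi (by
    simpa using this)
  exact ⟨i, Complex.ofReal_inj.mp heq⟩

lemma posSemidef_sub_minEig {n : Type*} [Fintype n] [DecidableEq n]
    {K : Matrix n n ℂ} (hK : K.IsHermitian) :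
    (K - (minEig K : ℂ) • 1).PosSemidef := by
  have hsub : {μ : ℝ | ∃ v : n → ℂ, v ≠ 0 ∧ K.mulVec v = (μ : ℂ) • v}
      ⊆ Set.range hK.eigenvalues := by
    rintro μ ⟨v, hv, h⟩
    exact eig_mem_range hK hv h
  have hbdd : BddBelow {μ : ℝ | ∃ v : n → ℂ, v ≠ 0 ∧ K.mulVec v = (μ : ℂ) • v} :=
    ((Set.finite_range _).subset hsub).bddBelow
  have h1 : ((minEig K : ℂ) • (1 : Matrix n n ℂ)).IsHermitian := by
    unfold Matrix.IsHermitian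
    rw [conjTranspose_smul, conjTranspose_one]
    congr 1
    simp [Complex.star_def, Complex.conj_ofReal]
  have hL : (K - (minEig K : ℂ) • 1).IsHermitian := hK.sub h1
  refine hL.posSemidef_iff_eigenvalues_nonneg.mpr fun i => ?_
  show 0 ≤ hL.eigenvalues i
  have hv := hL.mulVec_eigenvectorBasis i
  set v : n → ℂ := ⇑(hL.eigenvectorBasis i) with hvdef
  have hvne : v ≠ 0 := fun h0 => hL.eigenvectorBasis.orthonormal.ne_zero i (by ext j; exact congrFun h0 j)
  have hKv : K *ᵥ v = ((hL.eigenvalues i + minEig K : ℝ) : ℂ) • v := by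
    have e1 : K *ᵥ v = (K - (minEig K : ℂ) • 1) *ᵥ v + (minEig K : ℂ) • v := by
      rw [sub_mulVec, smul_mulVec, one_mulVec, sub_add_cancel]
    rw [e1, hv, real_smul_pi]
    rw [← add_smul]
    congr 1
    push_cast
    ring
  have hmem : (hL.eigenvalues i + minEig K) ∈
      {μ : ℝ | ∃ v : n → ℂ, v ≠ 0 ∧ K.mulVec v = (μ : ℂ) • v} := ⟨v, hvne, hKv⟩
  have h2 : minEig K ≤ hL.eigenvalues i + minEig K := csInf_le hbdd hmem
  linarith

/-! #### Compactness / attainment -/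

def unitSet (d : ℕ) : Set (Fin d → ℂ) := {α | star α ⬝ᵥ α = 1}

lemma isCompact_unitSet (d : ℕ) : IsCompact (unitSet d) := by
  have hcont : Continuous fun α : Fin d → ℂ => star α ⬝ᵥ α := by
    simp only [dotProduct, Pi.star_apply]
    exact continuous_finset_sum _ fun i _ => ((continuous_apply i).star).mul (continuous_apply i)
  have hclosed : IsClosed (unitSet d) := by
    have : unitSet d = (fun α : Fin d → ℂ => star α ⬝ᵥ α) ⁻¹' {1} := rfl
    rw [this]
    exact IsClosed.preimage hcont isClosed_singleton
  have hsub : unitSet d ⊆ Metric.closedBall 0 1 := by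
    intro α hα
    rw [Metric.mem_closedBall, dist_zero_right]
    rw [pi_norm_le_iff_of_nonneg (by norm_num : (0:ℝ) ≤ 1)]
    intro i
    have h1 : (∑ j, Complex.normSq (α j)) = 1 := by
      have h0 : star α ⬝ᵥ α = 1 := hα
      rw [star_dot_self_eq] at h0
      exact_mod_cast h0
    have h2 : Complex.normSq (α i) ≤ 1 := by
      rw [← h1]
      exact Finset.single_le_sum (fun j _ => Complex.normSq_nonneg (α j)) (Finset.mem_univ i)
    have h3 : ‖α i‖ ^ 2 ≤ 1 := by
      rw [← Complex.sq_norm] at h2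
      exact h2
    nlinarith [norm_nonneg (α i)]
  exact (isCompact_closedBall (0 : Fin d → ℂ) 1).of_isClosed_subset hclosed hsub

lemma unitSet_nonempty {d : ℕ} (hd : 0 < d) : (unitSet d).Nonempty := by
  refine ⟨Pi.single (⟨0, hd⟩ : Fin d) 1, ?_⟩
  simp only [unitSet, Set.mem_setOf_eq, dotProduct, Pi.star_apply]
  rw [Finset.sum_eq_single (⟨0, hd⟩ : Fin d)]
  · simp
  · intro j _ hj
    simp [Pi.single_apply, hj]
  · simp

lemma prodMin_attained {dA dB : ℕ} (hdA : 0 < dA) (hdB : 0 < dB)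
    (K : Matrix (Fin dA × Fin dB) (Fin dA × Fin dB) ℂ) :
    ∃ (α : Fin dA → ℂ) (β : Fin dB → ℂ),
      star (vecKron α β) ⬝ᵥ vecKron α β = 1 ∧
      (star (vecKron α β) ⬝ᵥ K.mulVec (vecKron α β)).re = prodMin K := by
  classical
  set f : (Fin dA → ℂ) × (Fin dB → ℂ) → ℝ :=
    fun q => (star (vecKron q.1 q.2) ⬝ᵥ K.mulVec (vecKron q.1 q.2)).re with hf
  have hcontA : ∀ i, Continuous fun q : (Fin dA → ℂ) × (Fin dB → ℂ) => q.1 i :=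
    fun i => (continuous_apply i).comp continuous_fst
  have hcontB : ∀ j, Continuous fun q : (Fin dA → ℂ) × (Fin dB → ℂ) => q.2 j :=
    fun j => (continuous_apply j).comp continuous_snd
  have hfc : Continuous f := by
    apply Complex.continuous_re.comp
    simp only [dotProduct, Matrix.mulVec, vecKron, Pi.star_apply]
    apply continuous_finset_sum
    intro p _
    exact (((hcontA p.1).mul (hcontB p.2)).star).mul
      (continuous_finset_sum _ fun p' _ =>
        continuous_const.mul ((hcontA p'.1).mul (hcontB p'.2)))
  have hset : {r : ℝ | ∃ (α : Fin dA → ℂ) (β : Fin dB → ℂ),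
      star (vecKron α β) ⬝ᵥ vecKron α β = 1 ∧
      (star (vecKron α β) ⬝ᵥ K.mulVec (vecKron α β)).re = r}
      = f '' (unitSet dA ×ˢ unitSet dB) := by
    ext r
    constructor
    · rintro ⟨α, β, hunit, hr⟩
      rw [dot_kron] at hunit
      set sr : ℝ := ∑ i, Complex.normSq (α i) with hsr
      set tr : ℝ := ∑ j, Complex.normSq (β j) with htr
      have hs : star α ⬝ᵥ α = (sr : ℂ) := star_dot_self_eq α
      have ht : star β ⬝ᵥ β = (tr : ℂ) := star_dot_self_eq β
      have hst : sr * tr = 1 := by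
        rw [hs, ht] at hunit
        exact_mod_cast hunit
      have hsr0 : 0 ≤ sr := Finset.sum_nonneg fun i _ => Complex.normSq_nonneg _
      have htr0 : 0 ≤ tr := Finset.sum_nonneg fun j _ => Complex.normSq_nonneg _
      set a : ℝ := Real.sqrt sr with ha
      set b : ℝ := Real.sqrt tr with hb
      have ha2 : a ^ 2 = sr := Real.sq_sqrt hsr0
      have hb2 : b ^ 2 = tr := Real.sq_sqrt htr0
      have hab : a * b = 1 := by
        have h1 : (a * b) ^ 2 = 1 := by rw [mul_pow, ha2, hb2, hst]
        have h2 : 0 ≤ a * b := mul_nonneg (Real.sqrt_nonneg _) (Real.sqrt_nonneg _)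
        nlinarith
      have ha0 : a ≠ 0 := fun h => by rw [h, zero_mul] at hab; norm_num at hab
      have hb0 : b ≠ 0 := fun h => by rw [h, mul_zero] at hab; norm_num at hab
      set α' : Fin dA → ℂ := ((a⁻¹ : ℝ) : ℂ) • α with hα'
      set β' : Fin dB → ℂ := ((b⁻¹ : ℝ) : ℂ) • β with hβ'
      have hkroneq : vecKron α' β' = vecKron α β := by
        funext p
        simp only [vecKron, hα', hβ', Pi.smul_apply, smul_eq_mul]
        have hre : a⁻¹ * b⁻¹ = 1 := by
          rw [← mul_inv, hab]; norm_num
        have : ((a⁻¹ : ℝ) : ℂ) * ((b⁻¹ : ℝ) : ℂ) = 1 := by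
          rw [← Complex.ofReal_mul, hre, Complex.ofReal_one]
        calc ((a⁻¹:ℝ):ℂ) * α p.1 * (((b⁻¹:ℝ):ℂ) * β p.2)
            = (((a⁻¹:ℝ):ℂ) * ((b⁻¹:ℝ):ℂ)) * (α p.1 * β p.2) := by ring
        _ = α p.1 * β p.2 := by rw [this, one_mul]
      have hstarc : ∀ r : ℝ, star ((r : ℂ)) = (r : ℂ) := fun r => by
        rw [Complex.star_def, Complex.conj_ofReal]
      have hαmem : α' ∈ unitSet dA := by
        show star α' ⬝ᵥ α' = 1
        rw [hα', star_smul, smul_dotProduct, dotProduct_smul, hs, hstarc]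
        simp only [smul_eq_mul]
        rw [← Complex.ofReal_mul, ← Complex.ofReal_mul]
        rw [show a⁻¹ * (a⁻¹ * sr) = 1 by rw [← ha2]; field_simp]
        norm_num
      have hβmem : β' ∈ unitSet dB := by
        show star β' ⬝ᵥ β' = 1
        rw [hβ', star_smul, smul_dotProduct, dotProduct_smul, ht, hstarc]
        simp only [smul_eq_mul]
        rw [← Complex.ofReal_mul, ← Complex.ofReal_mul]
        rw [show b⁻¹ * (b⁻¹ * tr) = 1 by rw [← hb2]; field_simp]
        norm_num
      refine ⟨(α', β'), ⟨hαmem, hβmem⟩, ?_⟩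
      show (star (vecKron α' β') ⬝ᵥ K *ᵥ vecKron α' β').re = r
      rw [hkroneq]
      exact hr
    · rintro ⟨⟨α, β⟩, ⟨hαu, hβu⟩, hr⟩
      exact ⟨α, β, by rw [dot_kron, hαu, hβu, one_mul], hr⟩
  have hTc : IsCompact (f '' (unitSet dA ×ˢ unitSet dB)) :=
    (((isCompact_unitSet dA).prod (isCompact_unitSet dB)).image hfc)
  have hTne : (f '' (unitSet dA ×ˢ unitSet dB)).Nonempty :=
    Set.Nonempty.image f (((unitSet_nonempty hdA).prod (unitSet_nonempty hdB)))
  have hmem := hTc.sInf_mem hTne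
  rw [← hset] at hmem
  obtain ⟨α, β, hunit, hval⟩ := hmem
  exact ⟨α, β, hunit, hval⟩

/-! #### Hermiticity helpers -/

lemma herm_kron {dA dB : ℕ} {A : Matrix (Fin dA) (Fin dA) ℂ} {B : Matrix (Fin dB) (Fin dB) ℂ}
    (hA : A.IsHermitian) (hB : B.IsHermitian) : (A ⊗ₖ B).IsHermitian := by
  unfold Matrix.IsHermitian
  ext p q
  rw [conjTranspose_apply]
  simp only [kroneckerMap_apply]
  rw [star_mul', ← conjTranspose_apply A, ← conjTranspose_apply B, hA, hB]

lemma herm_real_smul {n : Type*} [Fintype n] (c : ℝ) {M : Matrix n n ℂ}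
    (hM : M.IsHermitian) : ((c : ℂ) • M).IsHermitian := by
  unfold Matrix.IsHermitian
  rw [conjTranspose_smul, hM]
  congr 1
  simp [Complex.star_def, Complex.conj_ofReal]

/-! #### The main lemma for the minimum -/

lemma main_min {dA dB : ℕ} (hdA : 0 < dA) (hdB : 0 < dB)
    (A₁ A₂ : Matrix (Fin dA) (Fin dA) ℂ) (B₁ B₂ : Matrix (Fin dB) (Fin dB) ℂ)
    (hA₁ : A₁.IsHermitian) (hA₂ : A₂.IsHermitian)
    (hB₁ : B₁.IsHermitian) (hB₂ : B₂.IsHermitian)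
    (hA : ∀ (α : Fin dA → ℂ) (a₁ a₂ : ℂ), α ≠ 0 →
      A₁.mulVec α = a₁ • α → A₂.mulVec α = a₂ • α → a₁ = 0 ∧ a₂ = 0)
    (hB : ∀ (β : Fin dB → ℂ) (b₁ b₂ : ℂ), β ≠ 0 →
      B₁.mulVec β = b₁ • β → B₂.mulVec β = b₂ • β → b₁ = 0 ∧ b₂ = 0)
    {k₁ k₂ : ℝ} (hk₁ : k₁ ≠ 0) (hk₂ : k₂ ≠ 0)
    (hle : prodMin ((k₁ : ℂ) • (A₁ ⊗ₖ B₁) + (k₂ : ℂ) • (A₂ ⊗ₖ B₂))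
      ≤ minEig ((k₁ : ℂ) • (A₁ ⊗ₖ B₁) + (k₂ : ℂ) • (A₂ ⊗ₖ B₂))) :
    minEig ((k₁ : ℂ) • (A₁ ⊗ₖ B₁) + (k₂ : ℂ) • (A₂ ⊗ₖ B₂)) = 0 := by
  set K : Matrix (Fin dA × Fin dB) (Fin dA × Fin dB) ℂ :=
    (k₁ : ℂ) • (A₁ ⊗ₖ B₁) + (k₂ : ℂ) • (A₂ ⊗ₖ B₂) with hKdef
  have hKH : K.IsHermitian :=
    (herm_real_smul k₁ (herm_kron hA₁ hB₁)).add (herm_real_smul k₂ (herm_kron hA₂ hB₂))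
  obtain ⟨α, β, hunit, hval⟩ := prodMin_attained hdA hdB K
  obtain ⟨hα, hβ⟩ := ne_zero_of_unit_left hunit
  set v := vecKron α β with hv
  have hpsd := posSemidef_sub_minEig hKH
  have hsv : star v ⬝ᵥ (K - (minEig K : ℂ) • 1) *ᵥ v
      = star v ⬝ᵥ K *ᵥ v - (minEig K : ℂ) := by
    rw [sub_mulVec, smul_mulVec, one_mulVec, dotProduct_sub, dotProduct_smul]
    rw [smul_eq_mul]
    rw [show star v ⬝ᵥ v = 1 from hunit, mul_one]
  have hpos := hpsd.dotProduct_mulVec_nonneg v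
  obtain ⟨hre0, him0⟩ := Complex.le_def.mp hpos
  simp only [Complex.zero_re, Complex.zero_im] at hre0 him0
  have hexprre : (star v ⬝ᵥ (K - (minEig K : ℂ) • 1) *ᵥ v).re = prodMin K - minEig K := by
    rw [hsv, Complex.sub_re, hval, Complex.ofReal_re]
  have hzero : star v ⬝ᵥ (K - (minEig K : ℂ) • 1) *ᵥ v = 0 := by
    apply Complex.ext
    · rw [hexprre, Complex.zero_re]
      have hle2 : prodMin K - minEig K ≤ 0 := by linarith
      rw [hexprre] at hre0
      linarith
    · rw [Complex.zero_im, ← him0]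
  have hvec := (hpsd.dotProduct_mulVec_zero_iff v).mp hzero
  have hKv : K *ᵥ v = (minEig K : ℂ) • v := by
    rw [sub_mulVec, smul_mulVec, one_mulVec, sub_eq_zero] at hvec
    exact hvec
  have hexp : (k₁ : ℂ) • vecKron (A₁ *ᵥ α) (B₁ *ᵥ β) + (k₂ : ℂ) • vecKron (A₂ *ᵥ α) (B₂ *ᵥ β)
      = (minEig K : ℂ) • vecKron α β := by
    rw [← kron_mulVec, ← kron_mulVec, ← smul_mulVec, ← smul_mulVec, ← add_mulVec]
    exact hKv
  have hpt : ∀ p j, (k₁ : ℂ) * ((A₁ *ᵥ α) p * (B₁ *ᵥ β) j)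
      + (k₂ : ℂ) * ((A₂ *ᵥ α) p * (B₂ *ᵥ β) j) = (minEig K : ℂ) * (α p * β j) := by
    intro p j
    have := congrFun hexp (p, j)
    simpa [vecKron, Pi.add_apply, Pi.smul_apply, smul_eq_mul] using this
  have hz := eig_zero A₁ A₂ B₁ B₂ hA hB
    (Complex.ofReal_ne_zero.mpr hk₁) (Complex.ofReal_ne_zero.mpr hk₂) hα hβ hpt
  exact_mod_cast hz

/-! #### Negation lemmas -/

lemma minEig_neg {n : Type*} [Fintype n] (K : Matrix n n ℂ) : minEig (-K) = - maxEig K := by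
  unfold minEig maxEig
  have hset : {μ : ℝ | ∃ v : n → ℂ, v ≠ 0 ∧ (-K).mulVec v = (μ : ℂ) • v}
      = (-1 : ℝ) • {μ : ℝ | ∃ v : n → ℂ, v ≠ 0 ∧ K.mulVec v = (μ : ℂ) • v} := by
    ext μ
    simp only [Set.mem_setOf_eq, Set.mem_smul_set, smul_eq_mul, neg_one_mul]
    constructor
    · rintro ⟨v, hv, h⟩
      refine ⟨-μ, ⟨v, hv, ?_⟩, by ring⟩
      rw [neg_mulVec] at h
      rw [neg_eq_iff_eq_neg] at h
      rw [h]
      push_cast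
      rw [neg_smul]
    · rintro ⟨y, ⟨v, hv, h⟩, hy⟩
      refine ⟨v, hv, ?_⟩
      rw [neg_mulVec, h, ← hy]
      push_cast
      rw [neg_smul]
  rw [hset, Real.sInf_smul_of_nonpos (by norm_num), smul_eq_mul, neg_one_mul]

lemma prodMin_neg {dA dB : ℕ} (K : Matrix (Fin dA × Fin dB) (Fin dA × Fin dB) ℂ) :
    prodMin (-K) = - prodMax K := by
  unfold prodMin prodMax
  have hset : {r : ℝ | ∃ (α : Fin dA → ℂ) (β : Fin dB → ℂ),
        star (vecKron α β) ⬝ᵥ vecKron α β = 1 ∧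
        (star (vecKron α β) ⬝ᵥ (-K).mulVec (vecKron α β)).re = r}
      = (-1 : ℝ) • {r : ℝ | ∃ (α : Fin dA → ℂ) (β : Fin dB → ℂ),
        star (vecKron α β) ⬝ᵥ vecKron α β = 1 ∧
        (star (vecKron α β) ⬝ᵥ K.mulVec (vecKron α β)).re = r} := by
    ext r
    simp only [Set.mem_setOf_eq, Set.mem_smul_set, smul_eq_mul, neg_one_mul]
    constructor
    · rintro ⟨α, β, hunit, hr⟩
      refine ⟨-r, ⟨α, β, hunit, ?_⟩, by ring⟩
      rw [← hr, Matrix.neg_mulVec, dotProduct_neg, Complex.neg_re, neg_neg]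
    · rintro ⟨y, ⟨α, β, hunit, hy⟩, hr⟩
      refine ⟨α, β, hunit, ?_⟩
      rw [Matrix.neg_mulVec, dotProduct_neg, Complex.neg_re, hy, ← hr]
  rw [hset, Real.sInf_smul_of_nonpos (by norm_num), smul_eq_mul, neg_one_mul]

/-! #### The combination can not vanish -/

lemma no_zero {dA dB : ℕ}
    (A₁ A₂ : Matrix (Fin dA) (Fin dA) ℂ) (B₁ B₂ : Matrix (Fin dB) (Fin dB) ℂ)
    (hA₁ : A₁.IsHermitian)
    (hA : ∀ (α : Fin dA → ℂ) (a₁ a₂ : ℂ), α ≠ 0 →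
      A₁.mulVec α = a₁ • α → A₂.mulVec α = a₂ • α → a₁ = 0 ∧ a₂ = 0)
    {k₁ k₂ : ℝ} (hk₁ : k₁ ≠ 0) (hk₂ : k₂ ≠ 0)
    (h1 : A₁ ⊗ₖ B₁ ≠ 0)
    (hzero : (k₁ : ℂ) • (A₁ ⊗ₖ B₁) + (k₂ : ℂ) • (A₂ ⊗ₖ B₂) = 0) : False := by
  have hk₁' : (k₁ : ℂ) ≠ 0 := Complex.ofReal_ne_zero.mpr hk₁
  have hk₂' : (k₂ : ℂ) ≠ 0 := Complex.ofReal_ne_zero.mpr hk₂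
  have hent : ∀ (i i' : Fin dA) (j j' : Fin dB),
      (k₁ : ℂ) * (A₁ i i' * B₁ j j') + (k₂ : ℂ) * (A₂ i i' * B₂ j j') = 0 := by
    intro i i' j j'
    have := congrFun (congrFun hzero (i, j)) (i', j')
    simpa [Matrix.add_apply, Matrix.smul_apply, kroneckerMap_apply, smul_eq_mul] using this
  obtain ⟨p, hp⟩ := Function.ne_iff.mp h1
  obtain ⟨q, hq⟩ := Function.ne_iff.mp hp
  simp only [Matrix.zero_apply, kroneckerMap_apply, Pi.zero_apply] at hq
  obtain ⟨i, j⟩ := p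
  obtain ⟨i', j'⟩ := q
  have hA1ne : A₁ i i' ≠ 0 := fun h => hq (by rw [h, zero_mul])
  have hB1ne : B₁ j j' ≠ 0 := fun h => hq (by rw [h, mul_zero])
  have hB2ne : B₂ j j' ≠ 0 := by
    intro h
    have := hent i i' j j'
    rw [h, mul_zero, mul_zero, add_zero, mul_eq_zero] at this
    rcases this with h' | h'
    · exact hk₁' h'
    · exact hq h'
  set t : ℂ := (-(k₁ : ℂ) * B₁ j j') / ((k₂ : ℂ) * B₂ j j') with ht
  have hA₂eq : A₂ = t • A₁ := by
    ext p' q'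
    have := hent p' q' j j'
    simp only [Matrix.smul_apply, smul_eq_mul, ht]
    rw [div_mul_eq_mul_div, eq_div_iff (mul_ne_zero hk₂' hB2ne)]
    linear_combination this
  have hA1nz : A₁ ≠ 0 := by
    intro h
    exact hA1ne (by rw [h]; rfl)
  obtain ⟨w, a, ha0, hw0, hwa⟩ := hA₁.exists_eigenvector_of_ne_zero hA1nz
  have hwa' : A₁ *ᵥ w = ((a : ℝ) : ℂ) • w := by
    rw [hwa, real_smul_pi]
  have hwa2 : A₂ *ᵥ w = (t * (a : ℂ)) • w := by
    rw [hA₂eq, smul_mulVec, hwa', smul_smul]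
  obtain ⟨h0, -⟩ := hA w ((a : ℝ) : ℂ) (t * (a : ℂ)) hw0 hwa' hwa2
  exact ha0 (by exact_mod_cast h0)

end Stmt6Aux

/-- If every common eigenvector of the Hermitian matrices `A₁, A₂`
corresponds to eigenvalue `0` for both, and likewise for `B₁, B₂`, and `A₁⊗B₁ ≠ 0` or
`A₂⊗B₂ ≠ 0`, then for all nonzero reals `k₁, k₂`, setting `K = k₁ A₁⊗B₁ + k₂ A₂⊗B₂`,
either `λ_min(K) < λ⊗_min(K)` or `λ_max(K) > λ⊗_max(K)`. -/
theorem stmt6 {dA dB : ℕ}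
    (A₁ A₂ : Matrix (Fin dA) (Fin dA) ℂ) (B₁ B₂ : Matrix (Fin dB) (Fin dB) ℂ)
    (hA₁ : A₁.IsHermitian) (hA₂ : A₂.IsHermitian)
    (hB₁ : B₁.IsHermitian) (hB₂ : B₂.IsHermitian)
    (hA : ∀ (α : Fin dA → ℂ) (a₁ a₂ : ℂ), α ≠ 0 →
      A₁.mulVec α = a₁ • α → A₂.mulVec α = a₂ • α → a₁ = 0 ∧ a₂ = 0)
    (hB : ∀ (β : Fin dB → ℂ) (b₁ b₂ : ℂ), β ≠ 0 →
      B₁.mulVec β = b₁ • β → B₂.mulVec β = b₂ • β → b₁ = 0 ∧ b₂ = 0)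
    (hne : A₁ ⊗ₖ B₁ ≠ 0 ∨ A₂ ⊗ₖ B₂ ≠ 0)
    (k₁ k₂ : ℝ) (hk : k₁ * k₂ ≠ 0) :
    minEig ((k₁ : ℂ) • (A₁ ⊗ₖ B₁) + (k₂ : ℂ) • (A₂ ⊗ₖ B₂))
        < prodMin ((k₁ : ℂ) • (A₁ ⊗ₖ B₁) + (k₂ : ℂ) • (A₂ ⊗ₖ B₂)) ∨
      maxEig ((k₁ : ℂ) • (A₁ ⊗ₖ B₁) + (k₂ : ℂ) • (A₂ ⊗ₖ B₂))
        > prodMax ((k₁ : ℂ) • (A₁ ⊗ₖ B₁) + (k₂ : ℂ) • (A₂ ⊗ₖ B₂)) := by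
  classical
  open Stmt6Aux in
  open scoped ComplexOrder in
  have hk₁ : k₁ ≠ 0 := left_ne_zero_of_mul hk
  have hk₂ : k₂ ≠ 0 := right_ne_zero_of_mul hk
  have hdA : 0 < dA := by
    rcases Nat.eq_zero_or_pos dA with h | h
    · subst h
      exfalso
      rcases hne with h1 | h1 <;>
        exact h1 (by ext p q; exact p.1.elim0)
    · exact h
  have hdB : 0 < dB := by
    rcases Nat.eq_zero_or_pos dB with h | h
    · subst h
      exfalso
      rcases hne with h1 | h1 <;>
        exact h1 (by ext p q; exact p.2.elim0)
    · exact h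
  by_contra hcon
  push_neg at hcon
  obtain ⟨h1, h2⟩ := hcon
  set K : Matrix (Fin dA × Fin dB) (Fin dA × Fin dB) ℂ :=
    (k₁ : ℂ) • (A₁ ⊗ₖ B₁) + (k₂ : ℂ) • (A₂ ⊗ₖ B₂) with hKdef
  have hmin : minEig K = 0 :=
    main_min hdA hdB A₁ A₂ B₁ B₂ hA₁ hA₂ hB₁ hB₂ hA hB hk₁ hk₂ h1
  have hK' : ((-k₁ : ℝ) : ℂ) • (A₁ ⊗ₖ B₁) + ((-k₂ : ℝ) : ℂ) • (A₂ ⊗ₖ B₂) = -K := by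
    rw [hKdef]
    push_cast
    rw [neg_smul, neg_smul, neg_add]
  have hle' : prodMin (-K) ≤ minEig (-K) := by
    rw [prodMin_neg, minEig_neg]
    exact neg_le_neg h2
  have hmax0 : minEig (-K) = 0 := by
    have := main_min hdA hdB A₁ A₂ B₁ B₂ hA₁ hA₂ hB₁ hB₂ hA hB
      (neg_ne_zero.mpr hk₁) (neg_ne_zero.mpr hk₂) (by rw [hK']; exact hle')
    rw [hK'] at this
    exact this
  have hKH : K.IsHermitian :=
    (herm_real_smul k₁ (herm_kron hA₁ hB₁)).add (herm_real_smul k₂ (herm_kron hA₂ hB₂))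
  have hpsdK : K.PosSemidef := by
    have := posSemidef_sub_minEig hKH
    rw [hmin] at this
    simpa using this
  have hpsdK' : (-K).PosSemidef := by
    have := posSemidef_sub_minEig hKH.neg
    rw [hmax0] at this
    simpa using this
  have hKzero : K = 0 := by
    have hall : ∀ x : Fin dA × Fin dB → ℂ, K *ᵥ x = 0 := by
      intro x
      apply (hpsdK.dotProduct_mulVec_zero_iff x).mp
      have hp1 := hpsdK.dotProduct_mulVec_nonneg x
      have hp2 := hpsdK'.dotProduct_mulVec_nonneg x
      rw [Matrix.neg_mulVec, dotProduct_neg] at hp2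
      have hle0 : star x ⬝ᵥ K *ᵥ x ≤ 0 := by rwa [← neg_nonneg]
      exact le_antisymm hle0 hp1
    ext p q
    have h2' := hall (Pi.single q 1)
    have := congrFun h2' p
    simp only [Matrix.mulVec_single, mul_one, Pi.zero_apply] at this
    simpa using this
  rcases hne with hne1 | hne1
  · exact no_zero A₁ A₂ B₁ B₂ hA₁ hA hk₁ hk₂ hne1 hKzero
  · refine no_zero A₂ A₁ B₂ B₁ hA₂
      (fun α a₂ a₁ h0 e2 e1 => ⟨(hA α a₁ a₂ h0 e1 e2).2, (hA α a₁ a₂ h0 e1 e2).1⟩)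
      hk₂ hk₁ hne1 ?_
    rw [add_comm]
    exact hKzero
end

section
/- Let H be a Hermitian matrix acting on ℂ^{dA·dB} ≅ ℂ^{dA} ⊗ ℂ^{dB} with dA, dB ≥ 1. If no product unit vector v satisfies Hv = λ_min(H)·v, then λ_min(H) < λ⊗_min(H), i.e., the minimum eigenvalue of H is strictly smaller than the infimum of ⟨v, Hv⟩ over product unit vectors v. -/
open Matrix

namespace Stmt7Aux

open scoped InnerProductSpace ComplexConjugate

variable {n : Type*} [Fintype n] [DecidableEq n] {H : Matrix n n ℂ}

/-- The eigenvectors of a Hermitian matrix as plain functions. -/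
noncomputable def evec (hH : H.IsHermitian) (j : n) : n → ℂ := hH.eigenvectorBasis j

lemma mulVec_evec (hH : H.IsHermitian) (j : n) :
    H *ᵥ evec hH j = (hH.eigenvalues j : ℂ) • evec hH j := by
  have h := hH.mulVec_eigenvectorBasis j
  funext p
  have := congrFun h p
  simpa [evec, Complex.real_smul] using this

lemma ortho (hH : H.IsHermitian) (i j : n) :
    star (evec hH i) ⬝ᵥ evec hH j = if i = j then 1 else 0 := by
  have h := (orthonormal_iff_ite.mp hH.eigenvectorBasis.orthonormal) i j
  rw [EuclideanSpace.inner_eq_star_dotProduct, dotProduct_comm] at h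
  exact h

/-- Coefficients in the eigenbasis. -/
noncomputable def coeff (hH : H.IsHermitian) (v : n → ℂ) (j : n) : ℂ :=
  star (evec hH j) ⬝ᵥ v

lemma expand (hH : H.IsHermitian) (v : n → ℂ) :
    ∑ j, coeff hH v j • evec hH j = v := by
  set U := (hH.eigenvectorUnitary : Matrix n n ℂ) with hUdef
  have hU : U * star U = 1 := mem_unitaryGroup_iff.mp hH.eigenvectorUnitary.2
  have h2 : U *ᵥ (star U *ᵥ v) = v := by rw [mulVec_mulVec, hU, one_mulVec]
  funext p
  have h3 : (U *ᵥ (star U *ᵥ v)) p = ∑ j, coeff hH v j * evec hH j p := by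
    simp only [mulVec, dotProduct, coeff, evec, Matrix.star_apply, hUdef,
      Matrix.IsHermitian.eigenvectorUnitary_apply, Pi.star_apply, WithLp.equiv,
      Equiv.refl_apply, Equiv.coe_refl, id_eq]
    refine Finset.sum_congr rfl fun j _ => ?_
    rw [Finset.mul_sum, Finset.sum_mul]
    refine Finset.sum_congr rfl fun i _ => ?_
    change hH.eigenvectorBasis j p * (star (hH.eigenvectorBasis j i) * v i)
      = star (hH.eigenvectorBasis j i) * v i * hH.eigenvectorBasis j p
    ring
  conv_rhs => rw [← h2]
  rw [h3]
  simp

lemma coeff_eq_zero (hH : H.IsHermitian) {v : n → ℂ} (hv : ∀ j, coeff hH v j = 0) :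
    v = 0 := by
  rw [← expand hH v]
  simp [hv]

lemma star_dot_comm (u v : n → ℂ) : star v ⬝ᵥ u = conj (star u ⬝ᵥ v) := by
  simp only [dotProduct, Pi.star_apply, map_sum, _root_.map_mul, Complex.conj_conj,
    RCLike.star_def]
  exact Finset.sum_congr rfl fun i _ => by ring

lemma dotProduct_sum' (w : n → ℂ) (f : n → (n → ℂ)) :
    w ⬝ᵥ (∑ j, f j) = ∑ j, w ⬝ᵥ f j := by
  simp only [dotProduct, Finset.sum_apply, Finset.mul_sum]
  rw [Finset.sum_comm]

lemma mulVec_expand (hH : H.IsHermitian) (v : n → ℂ) :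
    H *ᵥ v = ∑ j, ((hH.eigenvalues j : ℂ) * coeff hH v j) • evec hH j := by
  conv_lhs => rw [← expand hH v]
  have : H *ᵥ (∑ j, coeff hH v j • evec hH j)
      = ∑ j, coeff hH v j • (H *ᵥ evec hH j) := by
    funext p
    simp only [mulVec, dotProduct, Finset.sum_apply, Pi.smul_apply, smul_eq_mul,
      Finset.mul_sum]
    rw [Finset.sum_comm]
    exact Finset.sum_congr rfl fun j _ => Finset.sum_congr rfl fun i _ => by ring
  rw [this]
  refine Finset.sum_congr rfl fun j _ => ?_
  rw [mulVec_evec hH j, smul_smul, mul_comm]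

lemma dot_right (hH : H.IsHermitian) (w v : n → ℂ) :
    star w ⬝ᵥ v = ∑ j, coeff hH v j * conj (coeff hH w j) := by
  conv_lhs => rw [← expand hH v]
  rw [dotProduct_sum' (star w) (fun j => coeff hH v j • evec hH j)]
  refine Finset.sum_congr rfl fun j _ => ?_
  rw [dotProduct_smul, smul_eq_mul, star_dot_comm (evec hH j) w]
  rfl

lemma coeff_mulVec (hH : H.IsHermitian) (v : n → ℂ) (j : n) :
    coeff hH (H *ᵥ v) j = (hH.eigenvalues j : ℂ) * coeff hH v j := by
  unfold coeff
  rw [mulVec_expand hH v,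
    dotProduct_sum' (star (evec hH j)) (fun k => ((hH.eigenvalues k : ℂ) * coeff hH v k) • evec hH k)]
  rw [Finset.sum_eq_single j]
  · rw [dotProduct_smul, smul_eq_mul, ortho hH j j]
    simp [coeff]
  · intro k _ hk
    rw [dotProduct_smul, smul_eq_mul, ortho hH j k]
    simp [Ne.symm hk]
  · simp

lemma coeff_smul (hH : H.IsHermitian) (v : n → ℂ) (a : ℂ) (j : n) :
    coeff hH (a • v) j = a * coeff hH v j := by
  unfold coeff
  rw [dotProduct_smul, smul_eq_mul]

lemma eigen_set (hH : H.IsHermitian) :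
    {μ : ℝ | ∃ v : n → ℂ, v ≠ 0 ∧ H.mulVec v = (μ : ℂ) • v} = Set.range hH.eigenvalues := by
  ext μ
  constructor
  · rintro ⟨v, hv0, hv⟩
    have hc : ∃ j, coeff hH v j ≠ 0 := by
      by_contra hall
      push_neg at hall
      exact hv0 (coeff_eq_zero hH hall)
    obtain ⟨j, hj⟩ := hc
    refine ⟨j, ?_⟩
    have h1 : (hH.eigenvalues j : ℂ) * coeff hH v j = (μ : ℂ) * coeff hH v j := by
      rw [← coeff_mulVec hH v j, hv, coeff_smul]
    have := mul_right_cancel₀ hj h1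
    exact_mod_cast this
  · rintro ⟨j, rfl⟩
    refine ⟨evec hH j, ?_, mulVec_evec hH j⟩
    intro h0
    have := ortho hH j j
    simp [h0] at this

lemma rayleigh_re (hH : H.IsHermitian) (v : n → ℂ) :
    (star v ⬝ᵥ (H *ᵥ v)).re = ∑ j, hH.eigenvalues j * Complex.normSq (coeff hH v j) := by
  rw [dot_right hH v (H *ᵥ v)]
  rw [Complex.re_sum]
  refine Finset.sum_congr rfl fun j _ => ?_
  rw [coeff_mulVec hH v j]
  have : (hH.eigenvalues j : ℂ) * coeff hH v j * conj (coeff hH v j)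
      = (hH.eigenvalues j : ℂ) * (Complex.normSq (coeff hH v j) : ℂ) := by
    rw [mul_assoc, Complex.mul_conj]
  rw [this]
  simp [← Complex.ofReal_mul]

lemma norm_re (hH : H.IsHermitian) (v : n → ℂ) :
    (star v ⬝ᵥ v).re = ∑ j, Complex.normSq (coeff hH v j) := by
  rw [dot_right hH v v, Complex.re_sum]
  refine Finset.sum_congr rfl fun j _ => ?_
  rw [Complex.mul_conj]
  simp

/-- Rayleigh lower bound with equality case. -/
lemma key (hH : H.IsHermitian) {m : ℝ} (hlow : ∀ j, m ≤ hH.eigenvalues j) (v : n → ℂ)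
    (hv : star v ⬝ᵥ v = 1) :
    m ≤ (star v ⬝ᵥ (H *ᵥ v)).re ∧
      ((star v ⬝ᵥ (H *ᵥ v)).re = m → H *ᵥ v = (m : ℂ) • v) := by
  have hsum1 : ∑ j, Complex.normSq (coeff hH v j) = 1 := by
    rw [← norm_re hH v, hv]
    simp
  have hR := rayleigh_re hH v
  have hge : m ≤ (star v ⬝ᵥ (H *ᵥ v)).re := by
    rw [hR]
    calc m = ∑ j, m * Complex.normSq (coeff hH v j) := by
          rw [← Finset.mul_sum, hsum1, mul_one]
      _ ≤ ∑ j, hH.eigenvalues j * Complex.normSq (coeff hH v j) :=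
          Finset.sum_le_sum fun j _ =>
            mul_le_mul_of_nonneg_right (hlow j) (Complex.normSq_nonneg _)
  refine ⟨hge, fun heq => ?_⟩
  have hz : ∀ j ∈ Finset.univ, (hH.eigenvalues j - m) * Complex.normSq (coeff hH v j) = 0 := by
    rw [← Finset.sum_eq_zero_iff_of_nonneg]
    · have : ∑ j, (hH.eigenvalues j - m) * Complex.normSq (coeff hH v j)
          = (star v ⬝ᵥ (H *ᵥ v)).re - m := by
        simp only [sub_mul]
        rw [Finset.sum_sub_distrib, ← Finset.mul_sum, hsum1, mul_one, hR]
      rw [this, heq, sub_self]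
    · intro j _
      exact mul_nonneg (sub_nonneg.mpr (hlow j)) (Complex.normSq_nonneg _)
  rw [mulVec_expand hH v]
  have hv' : (m : ℂ) • v = ∑ j, ((m : ℂ) * coeff hH v j) • evec hH j := by
    conv_lhs => rw [← expand hH v]
    rw [Finset.smul_sum]
    exact Finset.sum_congr rfl fun j _ => smul_smul _ _ _
  rw [hv']
  refine Finset.sum_congr rfl fun j _ => ?_
  rcases mul_eq_zero.mp (hz j (Finset.mem_univ j)) with h | h
  · rw [sub_eq_zero] at h
    rw [h]
  · rw [Complex.normSq_eq_zero.mp h]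
    simp

end Stmt7Aux

open Stmt7Aux in
lemma vecKron_dot {dA dB : ℕ} (α α' : Fin dA → ℂ) (β β' : Fin dB → ℂ) :
    star (vecKron α β) ⬝ᵥ vecKron α' β' = (star α ⬝ᵥ α') * (star β ⬝ᵥ β') := by
  simp only [dotProduct, Pi.star_apply, vecKron, Fintype.sum_prod_type, Finset.sum_mul_sum]
  refine Finset.sum_congr rfl fun i _ => Finset.sum_congr rfl fun j _ => ?_
  simp only [star_mul']
  ring

lemma vecKron_smul {dA dB : ℕ} (a b : ℂ) (α : Fin dA → ℂ) (β : Fin dB → ℂ) :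
    vecKron (a • α) (b • β) = (a * b) • vecKron α β := by
  funext p
  simp only [vecKron, Pi.smul_apply, smul_eq_mul]
  ring

/-- If no product unit vector is an eigenvector of the Hermitian matrix `H`
for its least eigenvalue, then `λ_min(H) < λ⊗_min(H)`. -/
theorem stmt7 {dA dB : ℕ} (hdA : 1 ≤ dA) (hdB : 1 ≤ dB)
    (H : Matrix (Fin dA × Fin dB) (Fin dA × Fin dB) ℂ) (hH : H.IsHermitian)
    (h : ¬ ∃ (α : Fin dA → ℂ) (β : Fin dB → ℂ),
      star (vecKron α β) ⬝ᵥ vecKron α β = 1 ∧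
      H.mulVec (vecKron α β) = (↑(minEig H) : ℂ) • vecKron α β) :
    minEig H < prodMin H := by
  classical
  haveI : NeZero dA := ⟨by omega⟩
  haveI : NeZero dB := ⟨by omega⟩
  -- minEig facts
  have hset : {μ : ℝ | ∃ v : Fin dA × Fin dB → ℂ, v ≠ 0 ∧ H.mulVec v = (μ : ℂ) • v}
      = Set.range hH.eigenvalues := Stmt7Aux.eigen_set hH
  have hmem : minEig H ∈ Set.range hH.eigenvalues := by
    rw [minEig, hset]
    exact (Set.range_nonempty _).csInf_mem (Set.finite_range _)
  have hlow : ∀ j, minEig H ≤ hH.eigenvalues j := by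
    intro j
    rw [minEig, hset]
    exact csInf_le (Set.finite_range _).bddBelow ⟨j, rfl⟩
  -- the Rayleigh function on pairs
  set g : EuclideanSpace ℂ (Fin dA) × EuclideanSpace ℂ (Fin dB) → ℝ :=
    fun p => (star (vecKron p.1 p.2) ⬝ᵥ H.mulVec (vecKron p.1 p.2)).re with hgdef
  have hgcont : Continuous g := by
    apply Complex.continuous_re.comp
    simp only [dotProduct, mulVec, vecKron, Pi.star_apply]
    apply continuous_finset_sum
    intro p _
    apply Continuous.mul
    · apply Continuous.star
      fun_prop
    · apply continuous_finset_sum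
      intro q _
      fun_prop
  -- the compact set of pairs of unit vectors
  set K : Set (EuclideanSpace ℂ (Fin dA) × EuclideanSpace ℂ (Fin dB)) :=
    (Metric.sphere 0 1) ×ˢ (Metric.sphere 0 1) with hKdef
  have hKc : IsCompact K := (isCompact_sphere _ _).prod (isCompact_sphere _ _)
  have hKne : K.Nonempty := by
    refine ⟨(EuclideanSpace.single ⟨0, by omega⟩ 1, EuclideanSpace.single ⟨0, by omega⟩ 1), ?_, ?_⟩
    · simp [EuclideanSpace.norm_single]
    · simp [EuclideanSpace.norm_single]
  obtain ⟨p₀, hp₀K, hp₀min⟩ := hKc.exists_isMinOn hKne hgcont.continuousOn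
  -- norms to dot products
  have hdot : ∀ {k : ℕ} (x : EuclideanSpace ℂ (Fin k)), star (x : Fin k → ℂ) ⬝ᵥ x = (‖x‖ : ℂ) ^ 2 := by
    intro k x
    have := EuclideanSpace.inner_eq_star_dotProduct x x
    rw [inner_self_eq_norm_sq_to_K, dotProduct_comm] at this
    exact this.symm
  have hp₀1 : ‖p₀.1‖ = 1 := by
    have := hp₀K.1
    simpa using this
  have hp₀2 : ‖p₀.2‖ = 1 := by
    have := hp₀K.2
    simpa using this
  have hp₀unit : star (vecKron p₀.1 p₀.2) ⬝ᵥ vecKron p₀.1 p₀.2 = 1 := by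
    rw [vecKron_dot, hdot p₀.1, hdot p₀.2, hp₀1, hp₀2]
    norm_num
  -- every element of the prodMin set is ≥ g p₀
  set S : Set ℝ := {r : ℝ | ∃ (α : Fin dA → ℂ) (β : Fin dB → ℂ),
    star (vecKron α β) ⬝ᵥ vecKron α β = 1 ∧
    (star (vecKron α β) ⬝ᵥ H.mulVec (vecKron α β)).re = r} with hSdef
  have hSlb : ∀ r ∈ S, g p₀ ≤ r := by
    rintro r ⟨α, β, hαβ, rfl⟩
    set αE : EuclideanSpace ℂ (Fin dA) := WithLp.toLp 2 α with hαE
    set βE : EuclideanSpace ℂ (Fin dB) := WithLp.toLp 2 β with hβE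
    have hprod : (‖αE‖ * ‖βE‖ : ℂ) ^ 2 = 1 := by
      rw [mul_pow]
      push_cast
      rw [← hdot αE, ← hdot βE, ← vecKron_dot, hαβ]
    have hprodR : ‖αE‖ * ‖βE‖ = 1 := by
      have h2 : ((‖αE‖ * ‖βE‖) ^ 2 : ℝ) = 1 := by exact_mod_cast hprod
      nlinarith [norm_nonneg αE, norm_nonneg βE, mul_nonneg (norm_nonneg αE) (norm_nonneg βE)]
    have hα0 : ‖αE‖ ≠ 0 := by
      intro h0
      rw [h0, zero_mul] at hprodR
      norm_num at hprodR
    set s : ℝ := ‖αE‖ with hs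
    have hspos : 0 < s := lt_of_le_of_ne (norm_nonneg _) (Ne.symm hα0)
    set αn : EuclideanSpace ℂ (Fin dA) := ((s⁻¹ : ℂ)) • αE with hαn
    set βn : EuclideanSpace ℂ (Fin dB) := ((s : ℂ)) • βE with hβn
    have hkr : vecKron (αn : Fin dA → ℂ) (βn : Fin dB → ℂ) = vecKron α β := by
      have : vecKron ((s⁻¹ : ℂ) • α) ((s : ℂ) • β) = ((s⁻¹ : ℂ) * s) • vecKron α β :=
        vecKron_smul _ _ _ _
      have h1 : ((s : ℂ))⁻¹ * (s : ℂ) = 1 :=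
        inv_mul_cancel₀ (by exact_mod_cast hα0)
      rw [show ((s⁻¹ : ℂ)) = ((s : ℂ))⁻¹ by push_cast; ring, h1, one_smul] at this
      exact this
    have hmemK : (αn, βn) ∈ K := by
      constructor
      · simp only [Metric.mem_sphere, dist_zero_right]
        rw [hαn, norm_smul]
        simp [hs, abs_of_pos hspos, inv_mul_cancel₀ (ne_of_gt hspos)]
        exact inv_mul_cancel₀ (ne_of_gt hspos)
      · simp only [Metric.mem_sphere, dist_zero_right]
        rw [hβn, norm_smul]
        have : ‖((s : ℂ))‖ = s := by
          simp [hs, abs_of_pos hspos]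
        rw [this]
        exact hprodR
    have := hp₀min hmemK
    simpa [hgdef, hkr] using this
  have hgS : g p₀ ∈ S := ⟨p₀.1, p₀.2, hp₀unit, rfl⟩
  -- minEig ≤ g p₀ with strictness
  obtain ⟨hge, heqcase⟩ := Stmt7Aux.key hH hlow (vecKron p₀.1 p₀.2) hp₀unit
  have hne : (star (vecKron p₀.1 p₀.2) ⬝ᵥ H.mulVec (vecKron p₀.1 p₀.2)).re ≠ minEig H := by
    intro heq
    exact h ⟨p₀.1, p₀.2, hp₀unit, heqcase heq⟩
  have hlt : minEig H < g p₀ := lt_of_le_of_ne hge (Ne.symm hne)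
  have hfinal : g p₀ ≤ prodMin H := le_csInf ⟨g p₀, hgS⟩ hSlb
  exact lt_of_lt_of_le hlt hfinal
end
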